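/- arXiv:1207.4214 — 2 statements merged into one kernel-verified Lean document; each statement's English description precedes it below -/
import Mathlib

section
/- Let μ₀, λ₀ : I → ℝ be continuously differentiable and strictly positive on an open interval I, and let x* ∈ I satisfy μ₀(x*) = λ₀(x*). Define g₁(x) = ln(μ₀(x)/λ₀(x)) and g₂(x) = 2(μ₀(x) − λ₀(x))/(μ₀(x) + λ₀(x)). Then g₁(x*) = g₂(x*) = 0 and g₁′(x*) = g₂′(x*) = (μ₀′(x*) − λ₀′(x*))/μ₀(x*). Consequently the leading-order stationary potentials of the chemical master equation and of its diffusion approximation have matched locations of extrema and matched curvatures at every fixed point of b(x) = μ₀(x) − λ₀(x). -/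
/-- At a fixed point `x*` of `b = μ₀ - λ₀`, the log-derivatives of the CME
stationary density, `g₁ = ln(μ₀/λ₀)`, and of its diffusion approximation,
`g₂ = 2(μ₀ - λ₀)/(μ₀ + λ₀)`, both vanish and have the same slope
`(μ₀'(x*) - λ₀'(x*))/μ₀(x*)`. -/
theorem cme_and_diffusion_potentials_match_at_fixed_points
    (a₁ a₂ : ℝ) (mu0 lam0 : ℝ → ℝ)
    (hmu : ContDiffOn ℝ 1 mu0 (Set.Ioo a₁ a₂))
    (hlam : ContDiffOn ℝ 1 lam0 (Set.Ioo a₁ a₂))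
    (hmupos : ∀ x ∈ Set.Ioo a₁ a₂, 0 < mu0 x)
    (hlampos : ∀ x ∈ Set.Ioo a₁ a₂, 0 < lam0 x)
    (xs : ℝ) (hxs : xs ∈ Set.Ioo a₁ a₂)
    (hfix : mu0 xs = lam0 xs)
    (g₁ g₂ : ℝ → ℝ)
    (hg₁ : ∀ x ∈ Set.Ioo a₁ a₂, g₁ x = Real.log (mu0 x / lam0 x))
    (hg₂ : ∀ x ∈ Set.Ioo a₁ a₂, g₂ x = 2 * (mu0 x - lam0 x) / (mu0 x + lam0 x)) :
    g₁ xs = 0 ∧ g₂ xs = 0 ∧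
    deriv g₁ xs = (deriv mu0 xs - deriv lam0 xs) / mu0 xs ∧
    deriv g₂ xs = (deriv mu0 xs - deriv lam0 xs) / mu0 xs := by
  have hmem : Set.Ioo a₁ a₂ ∈ nhds xs := isOpen_Ioo.mem_nhds hxs
  have hmuD : DifferentiableAt ℝ mu0 xs :=
    ((hmu.contDiffAt hmem).differentiableAt one_ne_zero)
  have hlamD : DifferentiableAt ℝ lam0 xs :=
    ((hlam.contDiffAt hmem).differentiableAt one_ne_zero)
  have hmuH : HasDerivAt mu0 (deriv mu0 xs) xs := hmuD.hasDerivAt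
  have hlamH : HasDerivAt lam0 (deriv lam0 xs) xs := hlamD.hasDerivAt
  have hmups : (0:ℝ) < mu0 xs := hmupos xs hxs
  have hlamps : (0:ℝ) < lam0 xs := hlampos xs hxs
  have hsum : mu0 xs + lam0 xs ≠ 0 := by positivity
  -- g₁ value
  have hg1v : g₁ xs = 0 := by
    rw [hg₁ xs hxs, hfix, div_self hlamps.ne', Real.log_one]
  have hg2v : g₂ xs = 0 := by
    rw [hg₂ xs hxs, hfix]; simp
  refine ⟨hg1v, hg2v, ?_, ?_⟩
  · -- g₁ agrees with log μ - log λ near xs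
    have heq : g₁ =ᶠ[nhds xs] fun x => Real.log (mu0 x) - Real.log (lam0 x) := by
      filter_upwards [hmem] with x hx
      rw [hg₁ x hx, Real.log_div (hmupos x hx).ne' (hlampos x hx).ne']
    rw [heq.deriv_eq]
    have h : HasDerivAt (fun x => Real.log (mu0 x) - Real.log (lam0 x))
        (deriv mu0 xs / mu0 xs - deriv lam0 xs / lam0 xs) xs :=
      (hmuH.log hmups.ne').sub (hlamH.log hlamps.ne')
    rw [h.deriv, hfix]
    field_simp [hfix]
  · have heq : g₂ =ᶠ[nhds xs] fun x => 2 * (mu0 x - lam0 x) / (mu0 x + lam0 x) := by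
      filter_upwards [hmem] with x hx
      exact hg₂ x hx
    rw [heq.deriv_eq]
    have hnum : HasDerivAt (fun x => 2 * (mu0 x - lam0 x))
        (2 * (deriv mu0 xs - deriv lam0 xs)) xs :=
      ((hmuH.sub hlamH).const_mul 2)
    have hden : HasDerivAt (fun x => mu0 x + lam0 x)
        (deriv mu0 xs + deriv lam0 xs) xs := hmuH.add hlamH
    have h := hnum.div hden hsum
    rw [show (fun x => 2 * (mu0 x - lam0 x) / (mu0 x + lam0 x)) = ((fun x => 2 * (mu0 x - lam0 x)) / fun x => mu0 x + lam0 x) from rfl, h.deriv]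
    rw [hfix]
    have : lam0 xs + lam0 xs = 2 * lam0 xs := by ring
    field_simp
    ring
end

section
/- Let k₁, k₂, k₋₁ > 0 and V > 0, and consider the birth–death process with rates u_n = k₁ n (n ≥ 0) and w_n = k₋₁ n(n−1)/V + k₂ n (n ≥ 1). Suppose (p_n)_{n≥0} is a nonnegative sequence with Σ_{n≥0} p_n = 1 satisfying the stationary chemical master equation: −u₀ p₀ + w₁ p₁ = 0 and u_{n−1} p_{n−1} − (u_n + w_n) p_n + w_{n+1} p_{n+1} = 0 for all n ≥ 1. Then p_n = 0 for every n ≥ 1 and p₀ = 1; i.e., for any values of k₁ − k₂ the unique stationary distribution assigns probability 1 to the extinction state n = 0 (Keizer's paradox), even though for k₁ > k₂ the deterministic limit dx/dt = (k₁ − k₂)x − k₋₁ x² has a stable fixed point at x = (k₁ − k₂)/k₋₁ > 0. -/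
/-- Keizer's paradox: for the birth–death process with rates `u_n = k₁ n` and
`w_n = k₋₁ n(n-1)/V + k₂ n`, any stationary probability distribution of the
chemical master equation is concentrated on the extinction state `n = 0`,
for all values of `k₁ - k₂`. -/
theorem keizer_paradox_extinction
    (k₁ k₂ km₁ V : ℝ) (hk₁ : 0 < k₁) (hk₂ : 0 < k₂) (hkm₁ : 0 < km₁)
    (hV : 0 < V)
    (u w p : ℕ → ℝ)
    (hu : ∀ n : ℕ, u n = k₁ * n)
    (hw : ∀ n : ℕ, w n = km₁ * n * ((n : ℝ) - 1) / V + k₂ * n)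
    (hpnn : ∀ n, 0 ≤ p n)
    (hsum : HasSum p 1)
    (hstat0 : -(u 0 * p 0) + w 1 * p 1 = 0)
    (hstat : ∀ n : ℕ, 1 ≤ n →
      u (n - 1) * p (n - 1) - (u n + w n) * p n + w (n + 1) * p (n + 1) = 0) :
    (∀ n : ℕ, 1 ≤ n → p n = 0) ∧ p 0 = 1 := by
  have wpos : ∀ n : ℕ, 1 ≤ n → 0 < w n := by
    intro n hn
    rw [hw]
    have h1 : (1 : ℝ) ≤ (n : ℝ) := by exact_mod_cast hn
    have h2 : 0 ≤ km₁ * n * ((n : ℝ) - 1) / V := by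
      apply div_nonneg _ hV.le
      have : (0:ℝ) ≤ (n:ℝ) - 1 := by linarith
      positivity
    have h3 : 0 < k₂ * n := by
      have : (0:ℝ) < (n:ℝ) := by linarith
      positivity
    linarith
  have hu0 : u 0 = 0 := by rw [hu]; simp
  have hp1 : p 1 = 0 := by
    have := hstat0
    rw [hu0] at this
    have h := wpos 1 le_rfl
    have : w 1 * p 1 = 0 := by linarith
    exact (mul_eq_zero.mp this).resolve_left h.ne' 
  have hp2 : p 2 = 0 := by
    have h := hstat 1 le_rfl
    simp only [Nat.sub_self] at h
    rw [hu0, hp1] at h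
    have hw2 := wpos 2 (by norm_num)
    have : w 2 * p 2 = 0 := by linarith
    exact (mul_eq_zero.mp this).resolve_left hw2.ne'
  have key : ∀ n : ℕ, p (n + 1) = 0 ∧ p (n + 2) = 0 := by
    intro n
    induction n with
    | zero => exact ⟨hp1, hp2⟩
    | succ m ih =>
      obtain ⟨ih1, ih2⟩ := ih
      refine ⟨ih2, ?_⟩
      have h := hstat (m + 2) (by omega)
      have hsub : m + 2 - 1 = m + 1 := by omega
      rw [hsub, ih1, ih2] at h
      have hw3 := wpos (m + 2 + 1) (by omega)
      have : w (m + 2 + 1) * p (m + 2 + 1) = 0 := by linarith [h]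
      have := (mul_eq_zero.mp this).resolve_left hw3.ne'
      simpa using this
  have hzero : ∀ n : ℕ, 1 ≤ n → p n = 0 := by
    intro n hn
    obtain ⟨m, rfl⟩ := Nat.exists_eq_add_of_le hn
    have := (key m).1
    simpa [Nat.add_comm] using this
  refine ⟨hzero, ?_⟩
  have hs0 : HasSum p (p 0) := by
    apply hasSum_single 0
    intro b hb
    exact hzero b (Nat.one_le_iff_ne_zero.mpr hb)
  exact (hs0.unique hsum)
end
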